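/- Let d ∈ ℕ, d ≥ 1, let γ > 0 be real, let α > 5/2 be real, and let v̂ : ℤ^d → ℂ satisfy ‖v̂‖_α < ∞. Then there exists a constant c₁ > 0, depending only on d, α, γ and v̂ (in particular independent of the modulus, the generating vector, the anti-aliasing family and the vector y), such that for every modulus n ≥ 1, every generating vector z ∈ ℤ^d, every minimal anti-aliasing family h_0,…,h_{n−1} for (z, n), and every y ∈ ℂ^n: ‖(DW − WD) y‖₂ ≤ c₁ · ‖(D + I) y‖₂, where D, W ∈ ℂ^{n×n} are the matrices defined in the context and I is the identity matrix. -/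

import Mathlib

noncomputable section

/-- Integer dot product on `ℤ^d`. -/
def dotZ {d : ℕ} (h z : Fin d → ℤ) : ℤ := ∑ i, h i * z i

/-- The squared Korobov weight `r_α(h)² = ∏_j max(|h_j|^(2α), 1)`. -/
def korWeightSq {d : ℕ} (α : ℝ) (h : Fin d → ℤ) : ℝ :=
  ∏ j, max (|(h j : ℝ)| ^ (2 * α)) 1

/-- The squared Euclidean norm `‖h‖₂² = Σ_j h_j²` of `h ∈ ℤ^d`. -/
def normSq {d : ℕ} (h : Fin d → ℤ) : ℝ := ∑ j, (h j : ℝ) ^ 2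

/-- The Euclidean norm of a complex vector. -/
def vecNorm {ι : Type*} [Fintype ι] (y : ι → ℂ) : ℝ := Real.sqrt (∑ ξ, ‖y ξ‖ ^ 2)

/-- The diagonal matrix `D` with entries `2π²γ‖h_ξ‖₂²`. -/
def Dmat {d : ℕ} (γ : ℝ) (n : ℕ) (hfam : Fin n → Fin d → ℤ) :
    Matrix (Fin n) (Fin n) ℂ :=
  Matrix.diagonal fun ξ => ((2 * Real.pi ^ 2 * γ * normSq (hfam ξ) : ℝ) : ℂ)

/-- The multiplication matrix `W` with entries
`W_{ξ,ξ'} = (1/γ) Σ_{h·z ≡ ξ−ξ' (mod n)} v̂(h)`. -/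
def Wmat {d : ℕ} (γ : ℝ) (vhat : (Fin d → ℤ) → ℂ) (n : ℕ) (z : Fin d → ℤ) :
    Matrix (Fin n) (Fin n) ℂ :=
  Matrix.of fun ξ ξ' => (1 / (γ : ℂ)) *
    ∑' h : {h : Fin d → ℤ //
        ((dotZ h z : ZMod n)) = ((ξ : ℕ) : ZMod n) - ((ξ' : ℕ) : ZMod n)},
      vhat h.1

lemma summable_max_rpow {b : ℝ} (hb : 1 < b) :
    Summable fun k : ℤ => (max |(k : ℝ)| 1) ^ (-b) := by
  have h1 := Real.summable_abs_int_rpow hb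
  have hind : Summable fun k : ℤ => (if k = 0 then (1:ℝ) else 0) := by
    apply summable_of_finite_support
    apply Set.Finite.subset (Set.finite_singleton (0:ℤ))
    intro k hk
    simp only [Function.support, Set.mem_setOf_eq] at hk
    by_contra hne
    exact hk (if_neg (by simpa using hne))
  have h2 := h1.add hind
  refine h2.of_nonneg_of_le (fun k => Real.rpow_nonneg (le_trans zero_le_one (le_max_right _ _)) _) ?_
  intro k
  rcases eq_or_ne k 0 with rfl | hk
  · rw [show max |((0:ℤ):ℝ)| 1 = 1 by simp, Real.one_rpow]
    rw [show |((0:ℤ):ℝ)| = 0 by simp, Real.zero_rpow (by linarith)]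
    simp
  · have hm : max |(k:ℝ)| 1 = |(k:ℝ)| := by
      have : (1:ℝ) ≤ |(k:ℝ)| := by
        rw [← Int.cast_abs]; exact_mod_cast Int.one_le_abs hk
      exact max_eq_left this
    rw [hm]
    simp [hk]

lemma summable_pi_prod {f : ℤ → ℝ} (hf0 : ∀ k, 0 ≤ f k) (hf : Summable f) :
    ∀ d : ℕ, Summable fun h : Fin d → ℤ => ∏ j, f (h j) := by
  intro d
  induction d with
  | zero =>
      simp only [Finset.univ_eq_empty, Finset.prod_empty]
      exact summable_of_finite_support (Set.toFinite _)
  | succ d ih =>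
      have h0f : (0:ℤ → ℝ) ≤ f := fun k => hf0 k
      have h0g : (0:((Fin d → ℤ) → ℝ)) ≤ fun h : Fin d → ℤ => ∏ j, f (h j) := by
        intro h
        exact Finset.prod_nonneg fun j _ => hf0 (h j)
      have he : Summable fun p : ℤ × (Fin d → ℤ) => f p.1 * ∏ j, f (p.2 j) :=
        Summable.mul_of_nonneg (f := f) (g := fun h : Fin d → ℤ => ∏ j, f (h j)) hf ih h0f h0g
      have h3 := he.comp_injective (Fin.consEquiv (fun _ => ℤ)).symm.injective
      refine h3.congr fun h => ?_
      rw [Fin.prod_univ_succ]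
      rfl

lemma one_le_max_abs (x : ℝ) : 1 ≤ max |x| 1 := le_max_right _ _

lemma maxpow_eq (α : ℝ) (hα : 0 < α) (x : ℝ) :
    max (|x| ^ (2 * α)) 1 = (max |x| 1) ^ (2 * α) := by
  rcases le_total |x| 1 with hx | hx
  · rw [max_eq_right, max_eq_right hx, Real.one_rpow]
    exact Real.rpow_le_one (abs_nonneg x) hx (by positivity)
  · rw [max_eq_left, max_eq_left hx]
    exact Real.one_le_rpow hx (by positivity)

lemma korWeightSq_eq {d : ℕ} (α : ℝ) (hα : 0 < α) (h : Fin d → ℤ) :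
    korWeightSq α h = ∏ j, (max |(h j : ℝ)| 1) ^ (2 * α) :=
  Finset.prod_congr rfl fun j _ => maxpow_eq α hα _

lemma one_le_korWeightSq {d : ℕ} (α : ℝ) (hα : 0 < α) (h : Fin d → ℤ) :
    1 ≤ korWeightSq α h := by
  rw [korWeightSq_eq α hα]
  calc (1:ℝ) = ∏ _j : Fin d, 1 := by simp
  _ ≤ _ := Finset.prod_le_prod (fun j _ => zero_le_one)
      (fun j _ => Real.one_le_rpow (one_le_max_abs _) (by positivity))

lemma normSq_nonneg {d : ℕ} (h : Fin d → ℤ) : 0 ≤ normSq h :=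
  Finset.sum_nonneg fun j _ => sq_nonneg _

lemma sqrt_normSq_le_sum {d : ℕ} (h : Fin d → ℤ) :
    Real.sqrt (normSq h) ≤ ∑ j, |(h j : ℝ)| := by
  rw [show (∑ j, |(h j : ℝ)|) = Real.sqrt ((∑ j, |(h j : ℝ)|) ^ 2) from
    (Real.sqrt_sq (Finset.sum_nonneg fun j _ => abs_nonneg _)).symm]
  apply Real.sqrt_le_sqrt
  calc normSq h = ∑ j, |(h j : ℝ)| ^ 2 := by simp [normSq, sq_abs]
  _ ≤ (∑ j, |(h j : ℝ)|) ^ 2 :=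
      Finset.sum_sq_le_sq_sum_of_nonneg fun j _ => abs_nonneg _

lemma one_add_sum_le_prod {d : ℕ} (x : Fin d → ℝ) (hx : ∀ j, 0 ≤ x j) :
    1 + ∑ j, x j ≤ ∏ j, (1 + x j) := by
  induction d with
  | zero => simp
  | succ d ih =>
      rw [Fin.sum_univ_succ, Fin.prod_univ_succ]
      have h1 : 1 + ∑ j : Fin d, x j.succ ≤ ∏ j : Fin d, (1 + x j.succ) :=
        ih (fun j => x j.succ) (fun j => hx _)
      have h2 : 0 ≤ ∑ j : Fin d, x j.succ := Finset.sum_nonneg fun j _ => hx _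
      nlinarith [hx 0]

/-- Key bound: `(1+‖h‖)⁴ / kor ≤ 2^(4d) ∏ m_j^(-(2α-4))`. -/
lemma quotient_bound {d : ℕ} (α : ℝ) (hα : 5/2 < α) (h : Fin d → ℤ) :
    (1 + Real.sqrt (normSq h)) ^ 4 / korWeightSq α h ≤
      (2:ℝ) ^ (4*d) * ∏ j, (max |(h j : ℝ)| 1) ^ (-(2*α - 4)) := by
  have hα0 : (0:ℝ) < α := by linarith
  set m : Fin d → ℝ := fun j => max |(h j : ℝ)| 1 with hm
  have hm1 : ∀ j, 1 ≤ m j := fun j => one_le_max_abs _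
  have hm0 : ∀ j, 0 < m j := fun j => lt_of_lt_of_le one_pos (hm1 j)
  have hkor : korWeightSq α h = ∏ j, m j ^ (2*α) := korWeightSq_eq α hα0 h
  have hnum : (1 + Real.sqrt (normSq h)) ^ 4 ≤ (2:ℝ)^(4*d) * ∏ j, m j ^ (4:ℝ) := by
    have step1 : 1 + Real.sqrt (normSq h) ≤ ∏ j, (1 + |(h j : ℝ)|) :=
      le_trans (by linarith [sqrt_normSq_le_sum h]) (one_add_sum_le_prod _ fun j => abs_nonneg _)
    have step2 : (∏ j, (1 + |(h j : ℝ)|)) ≤ ∏ j, 2 * m j := by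
      apply Finset.prod_le_prod (fun j _ => by positivity)
      intro j _
      have := le_max_left |(h j : ℝ)| 1
      have := hm1 j
      simp only [hm]
      linarith [le_max_left |(h j : ℝ)| 1, le_max_right |(h j : ℝ)| (1:ℝ)]
    have step3 : (∏ j, 2 * m j) = 2^d * ∏ j, m j := by
      rw [Finset.prod_mul_distrib]; simp
    have hnn : 0 ≤ 1 + Real.sqrt (normSq h) := by positivity
    calc (1 + Real.sqrt (normSq h)) ^ 4 ≤ (2^d * ∏ j, m j) ^ 4 := by
          apply pow_le_pow_left₀ hnn
          rw [← step3]; exact le_trans step1 step2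
    _ = (2:ℝ)^(4*d) * ∏ j, m j ^ (4:ℝ) := by
          rw [mul_pow, ← pow_mul, ← Finset.prod_pow]
          rw [mul_comm d 4]
          congr 1
          apply Finset.prod_congr rfl
          intro j _
          rw [← Real.rpow_natCast (m j) 4]
          norm_num
  have hkpos : 0 < korWeightSq α h := lt_of_lt_of_le one_pos (one_le_korWeightSq α hα0 h)
  rw [div_le_iff₀ hkpos]
  calc (1 + Real.sqrt (normSq h)) ^ 4 ≤ (2:ℝ)^(4*d) * ∏ j, m j ^ (4:ℝ) := hnum
  _ = (2:ℝ) ^ (4*d) * (∏ j, m j ^ (-(2*α - 4))) * korWeightSq α h := by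
      rw [hkor, mul_assoc, ← Finset.prod_mul_distrib]
      congr 1
      apply Finset.prod_congr rfl
      intro j _
      rw [← Real.rpow_add (hm0 j)]
      ring_nf

lemma summable_F0 {d : ℕ} (α : ℝ) (hα : 5/2 < α) (vhat : (Fin d → ℤ) → ℂ)
    (hv : Summable fun h : Fin d → ℤ => ‖vhat h‖ ^ 2 * korWeightSq α h) :
    Summable fun h : Fin d → ℤ => ‖vhat h‖ * (1 + Real.sqrt (normSq h)) ^ 2 := by
  have hα0 : (0:ℝ) < α := by linarith
  have hb : (1:ℝ) < 2*α - 4 := by linarith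
  have hG : Summable fun h : Fin d → ℤ =>
      (2:ℝ) ^ (4*d) * ∏ j, (max |(h j : ℝ)| 1) ^ (-(2*α - 4)) := by
    apply Summable.mul_left
    exact summable_pi_prod (fun k => Real.rpow_nonneg (by positivity) _)
      (summable_max_rpow hb) d
  have hsum : Summable fun h : Fin d → ℤ =>
      (‖vhat h‖ ^ 2 * korWeightSq α h +
        (2:ℝ) ^ (4*d) * ∏ j, (max |(h j : ℝ)| 1) ^ (-(2*α - 4))) := hv.add hG
  apply hsum.of_nonneg_of_le
  · intro h; positivity
  · intro h
    have hkpos : 0 < korWeightSq α h := lt_of_lt_of_le one_pos (one_le_korWeightSq α hα0 h)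
    have key : ‖vhat h‖ * (1 + Real.sqrt (normSq h)) ^ 2 ≤
        ‖vhat h‖ ^ 2 * korWeightSq α h + (1 + Real.sqrt (normSq h)) ^ 4 / korWeightSq α h := by
      have h2 : 2 * (‖vhat h‖ * (1 + Real.sqrt (normSq h)) ^ 2) ≤
          2 * (‖vhat h‖ ^ 2 * korWeightSq α h + (1 + Real.sqrt (normSq h)) ^ 4 / korWeightSq α h) := by
        have hs := Real.sq_sqrt hkpos.le
        set s := Real.sqrt (korWeightSq α h) with hsdef
        have hspos : 0 < s := Real.sqrt_pos.mpr hkpos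
        have e1 : ‖vhat h‖ * (1 + Real.sqrt (normSq h)) ^ 2 =
            (‖vhat h‖ * s) * ((1 + Real.sqrt (normSq h)) ^ 2 / s) := by
          field_simp
        have amgm : 2 * ((‖vhat h‖ * s) * ((1 + Real.sqrt (normSq h)) ^ 2 / s)) ≤
            (‖vhat h‖ * s)^2 + ((1 + Real.sqrt (normSq h)) ^ 2 / s)^2 := by
          nlinarith [sq_nonneg (‖vhat h‖ * s - (1 + Real.sqrt (normSq h)) ^ 2 / s)]
        have e2 : (‖vhat h‖ * s)^2 = ‖vhat h‖^2 * korWeightSq α h := by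
          rw [mul_pow, hsdef, Real.sq_sqrt hkpos.le]
        have e3 : ((1 + Real.sqrt (normSq h)) ^ 2 / s)^2 =
            (1 + Real.sqrt (normSq h)) ^ 4 / korWeightSq α h := by
          rw [div_pow, ← pow_mul, hsdef, Real.sq_sqrt hkpos.le]
        rw [e1, ← e2, ← e3]
        linarith [amgm, sq_nonneg (‖vhat h‖ * s), sq_nonneg ((1 + Real.sqrt (normSq h)) ^ 2 / s)]
      linarith
    calc ‖vhat h‖ * (1 + Real.sqrt (normSq h)) ^ 2 ≤ _ := key
    _ ≤ _ := by
        have := quotient_bound α hα h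
        linarith

lemma finCast_bijective (n : ℕ) [NeZero n] :
    Function.Bijective (fun ξ : Fin n => ((ξ : ℕ) : ZMod n)) := by
  rw [Fintype.bijective_iff_injective_and_card]
  refine ⟨fun ξ ξ' hh => ?_, by simp [ZMod.card]⟩
  have h2 := congrArg ZMod.val hh
  rw [ZMod.val_cast_of_lt ξ.2, ZMod.val_cast_of_lt ξ'.2] at h2
  exact Fin.ext h2

lemma coset_tsum_sum {d n : ℕ} [NeZero n] (z : Fin d → ℤ) (F : (Fin d → ℤ) → ℝ)
    (hF : Summable F) :
    ∑ c : ZMod n, (∑' h : {h : Fin d → ℤ // ((dotZ h z : ZMod n)) = c}, F h.1)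
      = ∑' h, F h := by
  classical
  set φ : (Fin d → ℤ) → ZMod n := fun h => ((dotZ h z : ZMod n)) with hφ
  have hs : Summable fun p : Σ c : ZMod n, {h // φ h = c} => F p.2.1 :=
    (hF.comp_injective (Equiv.sigmaFiberEquiv φ).injective).congr fun p => by
      rcases p with ⟨c, x⟩; simp [Equiv.sigmaFiberEquiv]
  have h1 : ∑' p : Σ c : ZMod n, {h // φ h = c}, F p.2.1 = ∑' h, F h := by
    rw [← Equiv.tsum_eq (Equiv.sigmaFiberEquiv φ) F]
    exact tsum_congr fun p => by rcases p with ⟨c, x⟩; simp [Equiv.sigmaFiberEquiv]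
  rw [← h1, Summable.tsum_sigma hs, tsum_fintype]

lemma schur_test {n : ℕ} (G : Fin n → Fin n → ℝ) (hG : ∀ ξ ξ', 0 ≤ G ξ ξ')
    (S : ℝ) (hS : 0 ≤ S)
    (hrow : ∀ ξ, ∑ ξ', G ξ ξ' ≤ S) (hcol : ∀ ξ', ∑ ξ, G ξ ξ' ≤ S)
    (w : Fin n → ℝ) (hw : ∀ ξ, 0 ≤ w ξ) :
    ∑ ξ, (∑ ξ', G ξ ξ' * w ξ') ^ 2 ≤ S ^ 2 * ∑ ξ, w ξ ^ 2 := by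
  have rowCS : ∀ ξ, (∑ ξ', G ξ ξ' * w ξ') ^ 2 ≤ S * ∑ ξ', G ξ ξ' * w ξ' ^ 2 := by
    intro ξ
    have cs := Finset.sum_sq_le_sum_mul_sum_of_sq_eq_mul Finset.univ
      (r := fun ξ' => G ξ ξ' * w ξ') (f := fun ξ' => G ξ ξ')
      (g := fun ξ' => G ξ ξ' * w ξ' ^ 2)
      (fun i _ => hG ξ i) (fun i _ => mul_nonneg (hG ξ i) (sq_nonneg _))
      (fun i _ => by ring)
    calc (∑ ξ', G ξ ξ' * w ξ') ^ 2 ≤ (∑ ξ', G ξ ξ') * ∑ ξ', G ξ ξ' * w ξ' ^ 2 := cs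
    _ ≤ S * ∑ ξ', G ξ ξ' * w ξ' ^ 2 :=
        mul_le_mul_of_nonneg_right (hrow ξ)
          (Finset.sum_nonneg fun i _ => mul_nonneg (hG ξ i) (sq_nonneg _))
  calc ∑ ξ, (∑ ξ', G ξ ξ' * w ξ') ^ 2 ≤ ∑ ξ, S * ∑ ξ', G ξ ξ' * w ξ' ^ 2 :=
        Finset.sum_le_sum fun ξ _ => rowCS ξ
  _ = S * ∑ ξ', (∑ ξ, G ξ ξ') * w ξ' ^ 2 := by
      rw [← Finset.mul_sum, Finset.sum_comm]
      congr 1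
      exact Finset.sum_congr rfl fun ξ' _ => (Finset.sum_mul _ _ _).symm
  _ ≤ S * ∑ ξ', S * w ξ' ^ 2 := by
      apply mul_le_mul_of_nonneg_left _ hS
      exact Finset.sum_le_sum fun ξ' _ =>
        mul_le_mul_of_nonneg_right (hcol ξ') (sq_nonneg _)
  _ = S ^ 2 * ∑ ξ, w ξ ^ 2 := by rw [← Finset.mul_sum]; ring

-- triangle inequality for normSq
lemma normSq_add_le {d : ℕ} (a b : Fin d → ℤ) :
    normSq (a + b) ≤ (Real.sqrt (normSq a) + Real.sqrt (normSq b)) ^ 2 := by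
  have hA : 0 ≤ normSq a := Finset.sum_nonneg fun j _ => sq_nonneg _
  have hB : 0 ≤ normSq b := Finset.sum_nonneg fun j _ => sq_nonneg _
  have cs2 : (∑ j, (a j : ℝ) * (b j : ℝ)) ^ 2 ≤ normSq a * normSq b :=
    Finset.sum_mul_sq_le_sq_mul_sq Finset.univ _ _
  have cs : (∑ j, (a j : ℝ) * (b j : ℝ)) ≤ Real.sqrt (normSq a) * Real.sqrt (normSq b) := by
    have h1 : (∑ j, (a j : ℝ) * (b j : ℝ)) ≤ |∑ j, (a j : ℝ) * (b j : ℝ)| := le_abs_self _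
    have h2 : |∑ j, (a j : ℝ) * (b j : ℝ)| = Real.sqrt ((∑ j, (a j : ℝ) * (b j : ℝ)) ^ 2) :=
      (Real.sqrt_sq_eq_abs _).symm
    rw [h2] at h1
    refine h1.trans ?_
    rw [← Real.sqrt_mul hA]
    exact Real.sqrt_le_sqrt cs2
  have expand : normSq (a + b) = normSq a + 2 * (∑ j, (a j : ℝ) * (b j : ℝ)) + normSq b := by
    unfold normSq
    rw [Finset.mul_sum, ← Finset.sum_add_distrib, ← Finset.sum_add_distrib]
    refine Finset.sum_congr rfl fun j _ => ?_
    have : ((a + b) j : ℝ) = (a j : ℝ) + (b j : ℝ) := by push_cast [Pi.add_apply]; ring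
    rw [this]; ring
  have sq : (Real.sqrt (normSq a) + Real.sqrt (normSq b)) ^ 2 =
      normSq a + 2 * (Real.sqrt (normSq a) * Real.sqrt (normSq b)) + normSq b := by
    rw [add_sq, Real.sq_sqrt hA, Real.sq_sqrt hB]; ring
  linarith

lemma normSq_neg {d : ℕ} (h : Fin d → ℤ) : normSq (-h) = normSq h := by
  unfold normSq; simp

lemma dotZ_add {d : ℕ} (a b z : Fin d → ℤ) : dotZ (a + b) z = dotZ a z + dotZ b z := by
  unfold dotZ
  rw [← Finset.sum_add_distrib]
  exact Finset.sum_congr rfl fun j _ => by rw [Pi.add_apply, add_mul]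

lemma dotZ_neg {d : ℕ} (a z : Fin d → ℤ) : dotZ (-a) z = -dotZ a z := by
  unfold dotZ
  rw [← Finset.sum_neg_distrib]
  exact Finset.sum_congr rfl fun j _ => by rw [Pi.neg_apply, neg_mul]

/-- (L4) minimality gives the difference bound. -/
lemma diff_bound {d n : ℕ} [NeZero n] (z : Fin d → ℤ) (hfam : Fin n → Fin d → ℤ)
    (hdot : ∀ ξ : Fin n, ((dotZ (hfam ξ) z : ZMod n)) = ((ξ : ℕ) : ZMod n))
    (hmin : ∀ (ξ : Fin n) (h : Fin d → ℤ),
      ((dotZ h z : ZMod n)) = ((ξ : ℕ) : ZMod n) → normSq (hfam ξ) ≤ normSq h)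
    (ξ ξ' : Fin n) (h : Fin d → ℤ)
    (hc : ((dotZ h z : ZMod n)) = ((ξ : ℕ) : ZMod n) - ((ξ' : ℕ) : ZMod n)) :
    |normSq (hfam ξ) - normSq (hfam ξ')| ≤
      2 * Real.sqrt (normSq (hfam ξ')) * Real.sqrt (normSq h) + normSq h := by
  set A := normSq (hfam ξ) with hA
  set B := normSq (hfam ξ') with hB
  set b := Real.sqrt (normSq h) with hb
  have hb2 : b ^ 2 = normSq h := Real.sq_sqrt (normSq_nonneg h)
  have hbnn : 0 ≤ b := Real.sqrt_nonneg _
  have hAnn : 0 ≤ A := normSq_nonneg _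
  have hBnn : 0 ≤ B := normSq_nonneg _
  have claim1 : A ≤ (Real.sqrt B + b) ^ 2 := by
    have hd : ((dotZ (hfam ξ' + h) z : ZMod n)) = ((ξ : ℕ) : ZMod n) := by
      rw [dotZ_add]
      push_cast
      rw [hdot ξ', hc]
      ring
    exact le_trans (hmin ξ _ hd) (normSq_add_le _ _)
  have claim2 : B ≤ (Real.sqrt A + b) ^ 2 := by
    have hd : ((dotZ (hfam ξ + (-h)) z : ZMod n)) = ((ξ' : ℕ) : ZMod n) := by
      rw [dotZ_add, dotZ_neg]
      push_cast
      rw [hdot ξ, hc]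
      ring
    refine le_trans (hmin ξ' _ hd) ?_
    have := normSq_add_le (hfam ξ) (-h)
    rwa [normSq_neg h] at this
  have hsB : Real.sqrt B ^ 2 = B := Real.sq_sqrt hBnn
  have hsA : Real.sqrt A ^ 2 = A := Real.sq_sqrt hAnn
  have hsAB : Real.sqrt A ≤ Real.sqrt B ∨ B ≤ A := by
    rcases le_total A B with hle | hle
    · exact Or.inl (Real.sqrt_le_sqrt hle)
    · exact Or.inr hle
  rcases le_total A B with hle | hle
  · rw [abs_of_nonpos (by linarith)]
    have hsab : Real.sqrt A ≤ Real.sqrt B := Real.sqrt_le_sqrt hle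
    have hsAnn : 0 ≤ Real.sqrt A := Real.sqrt_nonneg _
    nlinarith [claim2]
  · rw [abs_of_nonneg (by linarith)]
    nlinarith [claim1]

/-- (L5) scalar inequality. -/
lemma scalar_ineq (γ : ℝ) (hγ : 0 < γ) (a b : ℝ) (ha : 0 ≤ a) (hb : 0 ≤ b) :
    2 * Real.pi ^ 2 * γ * (2 * a * b + b ^ 2) ≤
      (Real.pi * Real.sqrt (2 * γ) + 2 * Real.pi ^ 2 * γ) *
        ((1 + 2 * Real.pi ^ 2 * γ * a ^ 2) * (1 + b) ^ 2) := by
  set π := Real.pi with hπ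
  have hπ0 : 0 < π := Real.pi_pos
  set s := Real.sqrt (2 * γ) with hs
  have hs2 : s ^ 2 = 2 * γ := Real.sq_sqrt (by linarith)
  have hs0 : 0 < s := Real.sqrt_pos.mpr (by linarith)
  set P := 1 + 2 * π ^ 2 * γ * a ^ 2 with hP
  have hP1 : 1 ≤ P := by
    have h0 : 0 ≤ 2 * π ^ 2 * γ * a ^ 2 := by positivity
    rw [hP]; linarith
  have hkey : 2 * π * s * a ≤ P := by
    have hsub : π ^ 2 * a ^ 2 * s ^ 2 = π ^ 2 * a ^ 2 * (2 * γ) := by rw [hs2]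
    nlinarith [sq_nonneg (π * s * a - 1), hsub]
  have hQ1 : b ≤ (1 + b) ^ 2 := by nlinarith
  have hQ2 : b ^ 2 ≤ (1 + b) ^ 2 := by nlinarith
  have hQ0 : 0 ≤ (1 + b) ^ 2 := sq_nonneg _
  have hPpos : 0 < P := lt_of_lt_of_le one_pos hP1
  have e1 : 2 * π ^ 2 * γ * (2 * a * b) = π * s * (2 * π * s * a * b) := by
    linear_combination (-2 * π ^ 2 * a * b) * hs2
  have step1 : 2 * π ^ 2 * γ * (2 * a * b) ≤ π * s * (P * b) := by
    rw [e1]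
    exact mul_le_mul_of_nonneg_left (mul_le_mul_of_nonneg_right hkey hb) (by positivity)
  have step2 : 2 * π ^ 2 * γ * b ^ 2 ≤ 2 * π ^ 2 * γ * (P * b ^ 2) := by
    exact mul_le_mul_of_nonneg_left (le_mul_of_one_le_left (sq_nonneg b) hP1) (by positivity)
  have hPb : P * b ≤ P * (1 + b) ^ 2 := mul_le_mul_of_nonneg_left hQ1 hPpos.le
  have hPb2 : P * b ^ 2 ≤ P * (1 + b) ^ 2 := mul_le_mul_of_nonneg_left hQ2 hPpos.le
  have t1 : π * s * (P * b) ≤ π * s * (P * (1 + b) ^ 2) :=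
    mul_le_mul_of_nonneg_left hPb (by positivity)
  have t2 : 2 * π ^ 2 * γ * (P * b ^ 2) ≤ 2 * π ^ 2 * γ * (P * (1 + b) ^ 2) :=
    mul_le_mul_of_nonneg_left hPb2 (by positivity)
  have expand : (π * s + 2 * π ^ 2 * γ) * (P * (1 + b) ^ 2) =
      π * s * (P * (1 + b) ^ 2) + 2 * π ^ 2 * γ * (P * (1 + b) ^ 2) := by ring
  have lexp : 2 * π ^ 2 * γ * (2 * a * b + b ^ 2) =
      2 * π ^ 2 * γ * (2 * a * b) + 2 * π ^ 2 * γ * b ^ 2 := by ring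
  linarith


set_option maxHeartbeats 1000000 in
/-- **Rank-1 lattice first commutator bound.** For `α > 5/2` and `‖v̂‖_α < ∞`,
there is `c₁ > 0`, independent of the modulus `n`, the generating vector `z`,
the minimal anti-aliasing family and `y`, such that
`‖(DW − WD) y‖₂ ≤ c₁ ‖(D + I) y‖₂`. -/
theorem rank1_first_commutator_bound
    (d : ℕ) (hd : 1 ≤ d) (γ : ℝ) (hγ : 0 < γ) (α : ℝ) (hα : 5 / 2 < α)
    (vhat : (Fin d → ℤ) → ℂ)
    (hv : Summable fun h : Fin d → ℤ => ‖vhat h‖ ^ 2 * korWeightSq α h) :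
    ∃ c₁ : ℝ, 0 < c₁ ∧
      ∀ (n : ℕ), 1 ≤ n → ∀ (z : Fin d → ℤ) (hfam : Fin n → Fin d → ℤ),
        (∀ ξ : Fin n, ((dotZ (hfam ξ) z : ZMod n)) = ((ξ : ℕ) : ZMod n)) →
        (∀ (ξ : Fin n) (h : Fin d → ℤ),
            ((dotZ h z : ZMod n)) = ((ξ : ℕ) : ZMod n) → normSq (hfam ξ) ≤ normSq h) →
        ∀ y : Fin n → ℂ,
          vecNorm ((Dmat γ n hfam * Wmat γ vhat n z
              - Wmat γ vhat n z * Dmat γ n hfam).mulVec y)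
            ≤ c₁ * vecNorm ((Dmat γ n hfam + 1).mulVec y) := by
  classical
  set F₀ : (Fin d → ℤ) → ℝ := fun h => ‖vhat h‖ * (1 + Real.sqrt (normSq h)) ^ 2 with hF₀def
  have hF₀ : Summable F₀ := summable_F0 α hα vhat hv
  have hF₀nn : ∀ h, 0 ≤ F₀ h := fun h =>
    mul_nonneg (norm_nonneg _) (sq_nonneg _)
  set S := ∑' h, F₀ h with hSdef
  have hS0 : 0 ≤ S := tsum_nonneg hF₀nn
  set K := Real.pi * Real.sqrt (2 * γ) + 2 * Real.pi ^ 2 * γ with hKdef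
  have hK0 : 0 < K := by
    have h1 : 0 < Real.sqrt (2 * γ) := Real.sqrt_pos.mpr (by linarith)
    have h2 : 0 < Real.pi := Real.pi_pos
    have h3 : 0 < 2 * Real.pi ^ 2 * γ := by
      have : (0:ℝ) < 2 * Real.pi ^ 2 := by positivity
      exact mul_pos this hγ
    have h4 : 0 < Real.pi * Real.sqrt (2 * γ) := mul_pos h2 h1
    rw [hKdef]; linarith
  have hKγ0 : 0 < K / γ := div_pos hK0 hγ
  refine ⟨K / γ * S + 1, by nlinarith [mul_nonneg hKγ0.le hS0], ?_⟩
  intro n hn z hfam hdot hmin y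
  haveI : NeZero n := ⟨by omega⟩
  set π := Real.pi with hπdef
  have hπ0 : 0 < π := Real.pi_pos
  set Dr : Fin n → ℝ := fun ξ => 2 * π ^ 2 * γ * normSq (hfam ξ) with hDrdef
  have hDr0 : ∀ ξ, 0 ≤ Dr ξ := fun ξ =>
    mul_nonneg (by positivity) (normSq_nonneg _)
  have hvn : Summable fun h : Fin d → ℤ => ‖vhat h‖ := by
    apply hF₀.of_nonneg_of_le (fun h => norm_nonneg _)
    intro h
    have h1 : 1 ≤ (1 + Real.sqrt (normSq h)) ^ 2 := by
      nlinarith [Real.sqrt_nonneg (normSq h)]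
    calc ‖vhat h‖ = ‖vhat h‖ * 1 := (mul_one _).symm
    _ ≤ F₀ h := mul_le_mul_of_nonneg_left h1 (norm_nonneg _)
  set g : ZMod n → ℝ :=
    fun c => ∑' h : {h : Fin d → ℤ // ((dotZ h z : ZMod n)) = c}, F₀ h.1 with hgdef
  have hg0 : ∀ c, 0 ≤ g c := fun c => tsum_nonneg fun h => hF₀nn _
  have hgsum : ∑ c : ZMod n, g c = S := coset_tsum_sum z F₀ hF₀
  set W := Wmat γ vhat n z with hWdef
  set A := Dmat γ n hfam * W - W * Dmat γ n hfam with hAdef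
  have entry : ∀ ξ ξ', A ξ ξ' = (((Dr ξ - Dr ξ' : ℝ)) : ℂ) * W ξ ξ' := by
    intro ξ ξ'
    rw [hAdef, Matrix.sub_apply]
    unfold Dmat
    rw [Matrix.diagonal_mul, Matrix.mul_diagonal]
    push_cast
    rw [hDrdef]
    push_cast [hπdef]
    ring
  -- entry bound
  have entryBound : ∀ ξ ξ',
      ‖A ξ ξ'‖ ≤ (K / γ) * g (((ξ:ℕ):ZMod n) - ((ξ':ℕ):ZMod n)) * (Dr ξ' + 1) := by
    intro ξ ξ'
    set c : ZMod n := ((ξ:ℕ):ZMod n) - ((ξ':ℕ):ZMod n) with hcdef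
    have hsubT : Summable fun h : {h : Fin d → ℤ // ((dotZ h z : ZMod n)) = c} =>
        ‖vhat h.1‖ := by
      have := hvn.subtype {h : Fin d → ℤ | ((dotZ h z : ZMod n)) = c}
      exact this.congr fun _ => rfl
    have hFsubT : Summable fun h : {h : Fin d → ℤ // ((dotZ h z : ZMod n)) = c} =>
        F₀ h.1 := by
      have := hF₀.subtype {h : Fin d → ℤ | ((dotZ h z : ZMod n)) = c}
      exact this.congr fun _ => rfl
    have normW : ‖W ξ ξ'‖ ≤ (1/γ) *
        ∑' h : {h : Fin d → ℤ // ((dotZ h z : ZMod n)) = c}, ‖vhat h.1‖ := by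
      have hWval : W ξ ξ' = (1 / (γ : ℂ)) *
          ∑' h : {h : Fin d → ℤ // ((dotZ h z : ZMod n)) = c}, vhat h.1 := rfl
      rw [hWval, norm_mul]
      have h1 : ‖(1 / (γ : ℂ))‖ = 1/γ := by
        rw [norm_div, norm_one, Complex.norm_real, Real.norm_eq_abs, abs_of_pos hγ]
      rw [h1]
      exact mul_le_mul_of_nonneg_left (norm_tsum_le_tsum_norm hsubT) (by positivity)
    have hnormA : ‖A ξ ξ'‖ = |Dr ξ - Dr ξ'| * ‖W ξ ξ'‖ := by
      rw [entry ξ ξ', norm_mul, Complex.norm_real, Real.norm_eq_abs]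
    have termwise : ∀ h : {h : Fin d → ℤ // ((dotZ h z : ZMod n)) = c},
        |Dr ξ - Dr ξ'| * ‖vhat h.1‖ ≤ (K * (Dr ξ' + 1)) * F₀ h.1 := by
      intro h
      have hdiff := diff_bound z hfam hdot hmin ξ ξ' h.1 h.2
      set a := Real.sqrt (normSq (hfam ξ')) with hadef
      set b := Real.sqrt (normSq h.1) with hbdef
      have ha2 : a ^ 2 = normSq (hfam ξ') := Real.sq_sqrt (normSq_nonneg _)
      have hb2 : b ^ 2 = normSq h.1 := Real.sq_sqrt (normSq_nonneg _)
      have hDabs : |Dr ξ - Dr ξ'| ≤ 2 * π ^ 2 * γ * (2 * a * b + b ^ 2) := by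
        have e : Dr ξ - Dr ξ' = 2 * π ^ 2 * γ * (normSq (hfam ξ) - normSq (hfam ξ')) := by
          rw [hDrdef]; ring
        rw [e, abs_mul, abs_of_pos (by positivity : (0:ℝ) < 2 * π ^ 2 * γ)]
        apply mul_le_mul_of_nonneg_left _ (by positivity : (0:ℝ) ≤ 2 * π ^ 2 * γ)
        rw [hb2]
        exact hdiff
      have hsc := scalar_ineq γ hγ a b (Real.sqrt_nonneg _) (Real.sqrt_nonneg _)
      rw [ha2] at hsc
      have hDle : |Dr ξ - Dr ξ'| ≤ K * ((Dr ξ' + 1) * (1 + b) ^ 2) := by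
        refine hDabs.trans (hsc.trans (le_of_eq ?_))
        rw [hKdef, hDrdef, hπdef]
        ring
      have hF₀h : F₀ h.1 = ‖vhat h.1‖ * (1 + b) ^ 2 := rfl
      calc |Dr ξ - Dr ξ'| * ‖vhat h.1‖
          ≤ (K * ((Dr ξ' + 1) * (1 + b) ^ 2)) * ‖vhat h.1‖ :=
            mul_le_mul_of_nonneg_right hDle (norm_nonneg _)
      _ = (K * (Dr ξ' + 1)) * F₀ h.1 := by rw [hF₀h]; ring
    have sumBound : |Dr ξ - Dr ξ'| *
        (∑' h : {h : Fin d → ℤ // ((dotZ h z : ZMod n)) = c}, ‖vhat h.1‖)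
          ≤ (K * (Dr ξ' + 1)) * g c := by
      rw [← tsum_mul_left, hgdef, ← tsum_mul_left]
      exact Summable.tsum_le_tsum termwise (hsubT.mul_left _) (hFsubT.mul_left _)
    calc ‖A ξ ξ'‖ = |Dr ξ - Dr ξ'| * ‖W ξ ξ'‖ := hnormA
    _ ≤ |Dr ξ - Dr ξ'| * ((1/γ) *
        ∑' h : {h : Fin d → ℤ // ((dotZ h z : ZMod n)) = c}, ‖vhat h.1‖) :=
        mul_le_mul_of_nonneg_left normW (abs_nonneg _)
    _ = (1/γ) * (|Dr ξ - Dr ξ'| *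
        ∑' h : {h : Fin d → ℤ // ((dotZ h z : ZMod n)) = c}, ‖vhat h.1‖) := by ring
    _ ≤ (1/γ) * ((K * (Dr ξ' + 1)) * g c) :=
        mul_le_mul_of_nonneg_left sumBound (by positivity)
    _ = (K / γ) * g c * (Dr ξ' + 1) := by ring
  -- the (D+1) diagonal action
  set u := (Dmat γ n hfam + 1).mulVec y with hudef
  have keyU : ∀ ξ', ‖u ξ'‖ = (Dr ξ' + 1) * ‖y ξ'‖ := by
    intro ξ'
    have hDI : (Dmat γ n hfam + 1) =
        Matrix.diagonal (fun ξ => (((Dr ξ + 1 : ℝ)) : ℂ)) := by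
      unfold Dmat
      rw [← Matrix.diagonal_one, Matrix.diagonal_add]
      congr 1
      funext ξ
      push_cast [hDrdef, hπdef]
      ring
    have : u ξ' = (((Dr ξ' + 1 : ℝ)) : ℂ) * y ξ' := by
      rw [hudef, hDI, Matrix.mulVec_diagonal]
    rw [this, norm_mul, Complex.norm_real, Real.norm_eq_abs,
      abs_of_pos (by linarith [hDr0 ξ'] : (0:ℝ) < Dr ξ' + 1)]
  set w : Fin n → ℝ := fun ξ => ‖u ξ‖ with hwdef
  set G : Fin n → Fin n → ℝ :=
    fun ξ ξ' => (K / γ) * g (((ξ:ℕ):ZMod n) - ((ξ':ℕ):ZMod n)) with hGdef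
  have hGnn : ∀ ξ ξ', 0 ≤ G ξ ξ' := fun ξ ξ' =>
    mul_nonneg hKγ0.le (hg0 _)
  have hrow : ∀ ξ, ∑ ξ', G ξ ξ' ≤ (K/γ) * S := by
    intro ξ
    rw [← Finset.mul_sum]
    apply mul_le_mul_of_nonneg_left _ hKγ0.le
    have hbij : Function.Bijective
        (fun ξ' : Fin n => ((ξ:ℕ):ZMod n) - ((ξ':ℕ):ZMod n)) :=
      (Equiv.subLeft ((ξ:ℕ):ZMod n)).bijective.comp (finCast_bijective n)
    rw [Fintype.sum_bijective _ hbij _ g (fun ξ' => rfl), hgsum]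
  have hcol : ∀ ξ', ∑ ξ, G ξ ξ' ≤ (K/γ) * S := by
    intro ξ'
    rw [← Finset.mul_sum]
    apply mul_le_mul_of_nonneg_left _ hKγ0.le
    have hbij : Function.Bijective
        (fun ξ : Fin n => ((ξ:ℕ):ZMod n) - ((ξ':ℕ):ZMod n)) :=
      (Equiv.subRight ((ξ':ℕ):ZMod n)).bijective.comp (finCast_bijective n)
    rw [Fintype.sum_bijective _ hbij _ g (fun ξ => rfl), hgsum]
  have hAv : ∀ ξ, ‖(A.mulVec y) ξ‖ ≤ ∑ ξ', G ξ ξ' * w ξ' := by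
    intro ξ
    have hmv : (A.mulVec y) ξ = ∑ ξ', A ξ ξ' * y ξ' := by
      simp [Matrix.mulVec, dotProduct]
    rw [hmv]
    refine (norm_sum_le _ _).trans ?_
    apply Finset.sum_le_sum
    intro ξ' _
    rw [norm_mul]
    calc ‖A ξ ξ'‖ * ‖y ξ'‖
        ≤ ((K / γ) * g (((ξ:ℕ):ZMod n) - ((ξ':ℕ):ZMod n)) * (Dr ξ' + 1)) * ‖y ξ'‖ :=
          mul_le_mul_of_nonneg_right (entryBound ξ ξ') (norm_nonneg _)
    _ = G ξ ξ' * ((Dr ξ' + 1) * ‖y ξ'‖) := by rw [hGdef]; ring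
    _ = G ξ ξ' * w ξ' := by
          show _ = G ξ ξ' * ‖u ξ'‖
          rw [keyU ξ']
  have schur := schur_test G hGnn ((K/γ) * S) (mul_nonneg hKγ0.le hS0) hrow hcol w
    (fun ξ => norm_nonneg _)
  -- finish
  have hsq : ∑ ξ, ‖(A.mulVec y) ξ‖ ^ 2 ≤ ∑ ξ, (∑ ξ', G ξ ξ' * w ξ') ^ 2 := by
    apply Finset.sum_le_sum
    intro ξ _
    exact pow_le_pow_left₀ (norm_nonneg _) (hAv ξ) 2
  have final : ∑ ξ, ‖(A.mulVec y) ξ‖ ^ 2 ≤ ((K/γ) * S) ^ 2 * ∑ ξ, w ξ ^ 2 :=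
    hsq.trans schur
  have hre : vecNorm (A.mulVec y) ≤ (K/γ) * S * vecNorm u := by
    unfold vecNorm
    refine (Real.sqrt_le_sqrt final).trans (le_of_eq ?_)
    rw [Real.sqrt_mul (sq_nonneg _), Real.sqrt_sq (mul_nonneg hKγ0.le hS0)]
  have huge : vecNorm u = vecNorm ((Dmat γ n hfam + 1).mulVec y) := by rw [hudef]
  calc vecNorm (A.mulVec y) ≤ (K/γ) * S * vecNorm u := hre
  _ ≤ (K / γ * S + 1) * vecNorm u := by
      have : 0 ≤ vecNorm u := Real.sqrt_nonneg _
      nlinarith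
  _ = (K / γ * S + 1) * vecNorm ((Dmat γ n hfam + 1).mulVec y) := by rw [huge]

end
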